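/- Let n ≥ 1 and α ∈ (0, 2). There exists a constant C = C(n, α) > 0 such that for every C¹ function u : ℝⁿ → ℝ, every bounded measurable g : ℝⁿ → ℝⁿ, every x ∈ ℝⁿ and every r > 0: ∫_{|z|<r} |u(x+z) − u(x) − ∇u(x)·z| |z|^{−(n+α)} |g(x+z)| dz ≤ C ‖g‖_∞ (D_α(∇u)(x))^{1/2} r^{1−α/2}, where D_α(∇u)(x) := ∫_{ℝⁿ} |∇u(x+z) − ∇u(x)|² |z|^{−(n+α)} dz is assumed finite. -/

import Mathlib

open MeasureTheory
open scoped RealInnerProductSpace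

section Aux

open Metric Set ENNReal

variable {E : Type*} [NormedAddCommGroup E] [NormedSpace ℝ E] [MeasurableSpace E]
  [BorelSpace E] [FiniteDimensional ℝ E]

/-- Lintegral under scaling for an additive Haar measure. -/
lemma aux_lintegral_comp_smul (μ : Measure E) [μ.IsAddHaarMeasure] (f : E → ℝ≥0∞) {R : ℝ}
    (hR : R ≠ 0) :
    ∫⁻ z, f (R • z) ∂μ = ENNReal.ofReal |(R ^ Module.finrank ℝ E)⁻¹| * ∫⁻ z, f z ∂μ := by
  have h := MeasureTheory.Measure.map_addHaar_smul (E := E) μ hR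
  have h2 := MeasureTheory.lintegral_map_equiv (μ := μ) f
    (Homeomorph.smul (isUnit_iff_ne_zero.2 hR).unit).toMeasurableEquiv
  have h3 : Measure.map (⇑(Homeomorph.smul (isUnit_iff_ne_zero.2 hR).unit).toMeasurableEquiv) μ
      = Measure.map (R • ·) μ := rfl
  rw [h3, h] at h2
  rw [lintegral_smul_measure] at h2
  exact h2.symm

/-- The function `‖z‖ ^ s` has finite lintegral on the unit ball when `s > -dim`. -/
lemma aux_lintegral_rpow_norm_ball_lt_top (μ : Measure E) [μ.IsAddHaarMeasure] [Nontrivial E]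
    {s : ℝ} (hs : -(Module.finrank ℝ E : ℝ) < s) :
    ∫⁻ z in ball (0 : E) 1, ENNReal.ofReal (‖z‖ ^ s) ∂μ < ⊤ := by
  set n := Module.finrank ℝ E with hn
  rcases le_or_gt 0 s with h0 | h0
  · calc ∫⁻ z in ball (0 : E) 1, ENNReal.ofReal (‖z‖ ^ s) ∂μ
        ≤ ∫⁻ _ in ball (0 : E) 1, 1 ∂μ := by
          refine setLIntegral_mono' measurableSet_ball fun z hz => ?_
          rw [mem_ball_zero_iff] at hz
          exact ENNReal.ofReal_le_one.2 (Real.rpow_le_one (norm_nonneg z) hz.le h0)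
      _ = μ (ball (0 : E) 1) := by simp
      _ < ⊤ := measure_ball_lt_top
  · -- s < 0
    set c : ℝ := (1 / 2 : ℝ) with hc
    have hc0 : (0:ℝ) < c := by norm_num [hc]
    have hc1 : c < 1 := by norm_num [hc]
    set A : ℕ → Set E := fun k => {z | c ^ (k + 1) ≤ ‖z‖ ∧ ‖z‖ < c ^ k} with hA
    have hAmeas : ∀ k, MeasurableSet (A k) := by
      intro k
      exact (measurableSet_le measurable_const measurable_norm).inter
        (measurableSet_lt measurable_norm measurable_const)
    have hcover : ball (0 : E) 1 ⊆ {0} ∪ ⋃ k, A k := by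
      intro z hz
      rw [mem_ball_zero_iff] at hz
      rcases eq_or_ne z 0 with rfl | hz0
      · exact Or.inl rfl
      · have hz0' : 0 < ‖z‖ := norm_pos_iff.2 hz0
        have hex : ∃ k : ℕ, c ^ (k + 1) ≤ ‖z‖ := by
          obtain ⟨m, hm⟩ := exists_pow_lt_of_lt_one hz0' hc1
          refine ⟨m, le_of_lt (lt_of_le_of_lt ?_ hm)⟩
          calc c ^ (m + 1) = c ^ m * c := by ring
            _ ≤ c ^ m * 1 := by nlinarith [pow_nonneg hc0.le m]
            _ = c ^ m := by ring
        refine Or.inr (Set.mem_iUnion.2 ⟨Nat.find hex, Nat.find_spec hex, ?_⟩)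
        rcases Nat.eq_zero_or_pos (Nat.find hex) with h | h
        · rw [h]; simpa using hz
        · obtain ⟨j, hj⟩ := Nat.exists_eq_succ_of_ne_zero h.ne'
          have := Nat.find_min hex (m := j) (by omega)
          rw [hj]
          exact lt_of_not_ge this
    have hterm : ∀ k : ℕ, ∫⁻ z in A k, ENNReal.ofReal (‖z‖ ^ s) ∂μ
        ≤ (ENNReal.ofReal (c ^ s) * ENNReal.ofReal (c ^ (s + (n:ℝ))) ^ k)
            * μ (ball (0 : E) 1) := by
      intro k
      have hb : ∀ z ∈ A k, ENNReal.ofReal (‖z‖ ^ s)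
          ≤ ENNReal.ofReal ((c ^ (k + 1) : ℝ) ^ s) := by
        intro z hz
        exact ENNReal.ofReal_le_ofReal
          (Real.rpow_le_rpow_of_nonpos (pow_pos hc0 _) hz.1 h0.le)
      have ereal : (c ^ (k + 1) : ℝ) ^ s * ((c ^ k : ℝ)) ^ n
          = c ^ s * ((c ^ (s + (n:ℝ)) : ℝ)) ^ k := by
        have h1 : (c ^ (k + 1) : ℝ) ^ s = c ^ (((k + 1 : ℕ) : ℝ) * s) := by
          rw [← Real.rpow_natCast c (k + 1), ← Real.rpow_mul hc0.le]
        have h2 : ((c ^ k : ℝ)) ^ n = c ^ (((k * n : ℕ) : ℝ)) := by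
          rw [← pow_mul, Real.rpow_natCast]
        have h3 : ((c ^ (s + (n:ℝ)) : ℝ)) ^ k = c ^ ((s + (n:ℝ)) * k) := by
          rw [← Real.rpow_natCast (c ^ (s + (n:ℝ))) k, ← Real.rpow_mul hc0.le]
        rw [h1, h2, h3, ← Real.rpow_add hc0, ← Real.rpow_add hc0]
        congr 1
        push_cast
        ring
      calc ∫⁻ z in A k, ENNReal.ofReal (‖z‖ ^ s) ∂μ
          ≤ ∫⁻ _ in A k, ENNReal.ofReal ((c ^ (k + 1) : ℝ) ^ s) ∂μ :=
            setLIntegral_mono' (hAmeas k) hb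
        _ = ENNReal.ofReal ((c ^ (k + 1) : ℝ) ^ s) * μ (A k) := setLIntegral_const _ _
        _ ≤ ENNReal.ofReal ((c ^ (k + 1) : ℝ) ^ s) * μ (ball (0 : E) (c ^ k)) := by
            gcongr
            intro z hz
            rw [mem_ball_zero_iff]
            exact hz.2
        _ = ENNReal.ofReal ((c ^ (k + 1) : ℝ) ^ s) *
              (ENNReal.ofReal ((c ^ k) ^ n) * μ (ball (0 : E) 1)) := by
            rw [Measure.addHaar_ball μ _ (pow_nonneg hc0.le _)]
        _ = (ENNReal.ofReal (c ^ s) * ENNReal.ofReal (c ^ (s + (n:ℝ))) ^ k)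
              * μ (ball (0 : E) 1) := by
            rw [← mul_assoc]
            congr 1
            rw [← ENNReal.ofReal_mul (Real.rpow_nonneg (pow_pos hc0 _).le _), ereal,
              ENNReal.ofReal_mul (Real.rpow_nonneg hc0.le _),
              ENNReal.ofReal_pow (Real.rpow_nonneg hc0.le _)]
    have hsum : ∑' k : ℕ, ((ENNReal.ofReal (c ^ s) * ENNReal.ofReal (c ^ (s + (n:ℝ))) ^ k)
        * μ (ball (0 : E) 1)) < ⊤ := by
      have hq : ENNReal.ofReal (c ^ (s + (n:ℝ))) < 1 :=
        ENNReal.ofReal_lt_one.2 (Real.rpow_lt_one hc0.le hc1 (by push_cast at hs ⊢; linarith))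
      calc ∑' k : ℕ, ((ENNReal.ofReal (c ^ s) * ENNReal.ofReal (c ^ (s + (n:ℝ))) ^ k)
            * μ (ball (0 : E) 1))
          = ∑' k : ℕ, (ENNReal.ofReal (c ^ s) * μ (ball (0 : E) 1))
              * ENNReal.ofReal (c ^ (s + (n:ℝ))) ^ k :=
            tsum_congr fun k => by ring
        _ = (ENNReal.ofReal (c ^ s) * μ (ball (0 : E) 1)) *
              ∑' k : ℕ, ENNReal.ofReal (c ^ (s + (n:ℝ))) ^ k := ENNReal.tsum_mul_left
        _ < ⊤ := by
            rw [ENNReal.tsum_geometric]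
            refine ENNReal.mul_lt_top (ENNReal.mul_lt_top ENNReal.ofReal_lt_top
              measure_ball_lt_top) ?_
            rw [ENNReal.inv_lt_top]
            exact tsub_pos_iff_lt.2 hq
    calc ∫⁻ z in ball (0 : E) 1, ENNReal.ofReal (‖z‖ ^ s) ∂μ
        ≤ ∫⁻ z in ({0} ∪ ⋃ k, A k : Set E), ENNReal.ofReal (‖z‖ ^ s) ∂μ :=
          lintegral_mono_set hcover
      _ ≤ (∫⁻ z in ({0} : Set E), ENNReal.ofReal (‖z‖ ^ s) ∂μ) +
            ∫⁻ z in (⋃ k, A k), ENNReal.ofReal (‖z‖ ^ s) ∂μ :=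
          lintegral_union_le _ _ _
      _ ≤ 0 + ∑' k : ℕ, ∫⁻ z in A k, ENNReal.ofReal (‖z‖ ^ s) ∂μ := by
          gcongr
          · refine le_of_eq ?_
            have h00 : ∀ z ∈ ({0} : Set E), ENNReal.ofReal (‖z‖ ^ s) = 0 := by
              intro z hz
              rw [Set.mem_singleton_iff] at hz
              subst hz
              simp [Real.zero_rpow h0.ne]
            calc ∫⁻ z in ({0} : Set E), ENNReal.ofReal (‖z‖ ^ s) ∂μ
                = ∫⁻ _ in ({0} : Set E), (0:ℝ≥0∞) ∂μ :=
                  setLIntegral_congr_fun (measurableSet_singleton 0) h00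
              _ = 0 := by simp
          · exact lintegral_iUnion_le _ _
      _ = ∑' k : ℕ, ∫⁻ z in A k, ENNReal.ofReal (‖z‖ ^ s) ∂μ := by rw [zero_add]
      _ ≤ ∑' k : ℕ, ((ENNReal.ofReal (c ^ s) * ENNReal.ofReal (c ^ (s + (n:ℝ))) ^ k)
            * μ (ball (0 : E) 1)) := ENNReal.tsum_le_tsum hterm
      _ < ⊤ := hsum

lemma aux_sq_helper (a b c : ℝ) (ha : 0 ≤ a) (hb : 0 ≤ b) :
    ENNReal.ofReal (a * b ^ c) ^ (2:ℝ) = ENNReal.ofReal (a ^ 2 * b ^ (2 * c)) := by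
  rw [ENNReal.ofReal_rpow_of_nonneg (mul_nonneg ha (Real.rpow_nonneg hb _)) (by norm_num)]
  congr 1
  rw [show ((2:ℝ)) = ((2:ℕ):ℝ) by norm_num, Real.rpow_natCast, mul_pow,
    ← Real.rpow_natCast (b ^ c) 2, ← Real.rpow_mul hb]
  congr 2
  push_cast
  ring

lemma aux_sq_helper' (b c : ℝ) (hb : 0 ≤ b) :
    ENNReal.ofReal (b ^ c) ^ (2:ℝ) = ENNReal.ofReal (b ^ (2 * c)) := by
  have := aux_sq_helper 1 b c zero_le_one hb
  simpa using this

end Aux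

/-- Small-scale estimate (term `I₁`): the Taylor remainder integral over `|z| < r`
against a bounded field `g` is controlled by `C ‖g‖_∞ D_α(∇u)(x)^{1/2} r^{1−α/2}`. -/
theorem stmt11 (n : ℕ) (hn : 1 ≤ n) (α : ℝ) (hα0 : 0 < α) (hα2 : α < 2) :
    ∃ C : ℝ, 0 < C ∧
      ∀ u : EuclideanSpace ℝ (Fin n) → ℝ, ContDiff ℝ 1 u →
      ∀ g : EuclideanSpace ℝ (Fin n) → EuclideanSpace ℝ (Fin n), Measurable g →
      ∀ G : ℝ, (∀ y, ‖g y‖ ≤ G) →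
      ∀ x : EuclideanSpace ℝ (Fin n), ∀ r : ℝ, 0 < r →
      Integrable (fun z : EuclideanSpace ℝ (Fin n) =>
        ‖gradient u (x + z) - gradient u x‖ ^ 2 * ‖z‖ ^ (-((n : ℝ) + α))) →
      (∫⁻ z in Metric.ball (0 : EuclideanSpace ℝ (Fin n)) r,
          ENNReal.ofReal
            (|u (x + z) - u x - ⟪gradient u x, z⟫| * ‖z‖ ^ (-((n : ℝ) + α)) * ‖g (x + z)‖)) ≤
        ENNReal.ofReal (C * G *
          Real.sqrt (∫ z : EuclideanSpace ℝ (Fin n),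
            ‖gradient u (x + z) - gradient u x‖ ^ 2 * ‖z‖ ^ (-((n : ℝ) + α))) *
          r ^ (1 - α / 2)) := by
  classical
  have hfr : Module.finrank ℝ (EuclideanSpace ℝ (Fin n)) = n := finrank_euclideanSpace_fin
  haveI : Nontrivial (EuclideanSpace ℝ (Fin n)) :=
    Module.nontrivial_of_finrank_pos (R := ℝ) (by rw [hfr]; omega)
  have hn1 : (1:ℝ) ≤ (n:ℝ) := by exact_mod_cast hn
  set K1 : ENNReal := ∫⁻ z in Metric.ball (0 : EuclideanSpace ℝ (Fin n)) 1,
      ENNReal.ofReal (‖z‖ ^ (2 - ((n : ℝ) + α))) with hK1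
  have hK1top : K1 < ⊤ := by
    apply aux_lintegral_rpow_norm_ball_lt_top
    rw [hfr]; linarith
  set κ : ℝ := K1.toReal with hκ
  have hκ0 : 0 ≤ κ := ENNReal.toReal_nonneg
  refine ⟨Real.sqrt κ + 1, by positivity, ?_⟩
  intro u hu g hg G hG x r hr hInt
  set s : ℝ := -((n : ℝ) + α) with hs
  have hnα1 : (1:ℝ) < (n:ℝ) + α := by linarith
  have h1s : (1:ℝ) + s ≠ 0 := by rw [hs]; intro h; linarith
  have hG0 : 0 ≤ G := le_trans (norm_nonneg _) (hG 0)
  set D : ℝ := ∫ z : EuclideanSpace ℝ (Fin n),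
      ‖gradient u (x + z) - gradient u x‖ ^ 2 * ‖z‖ ^ s with hD
  have hD0 : 0 ≤ D := integral_nonneg fun z => by positivity
  have hgc : Continuous (gradient u) := by
    have h1 : Continuous (fderiv ℝ u) := hu.continuous_fderiv one_ne_zero
    exact (InnerProductSpace.toDual ℝ (EuclideanSpace ℝ (Fin n))).symm.continuous.comp h1
  have hφc : Continuous fun w : EuclideanSpace ℝ (Fin n) =>
      ‖gradient u (x + w) - gradient u x‖ :=
    ((hgc.comp (continuous_const.add continuous_id)).sub continuous_const).norm
  have hinner : ∀ (y v : EuclideanSpace ℝ (Fin n)), (fderiv ℝ u y) v = ⟪gradient u y, v⟫ :=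
    fun y v => (InnerProductSpace.toDual_symm_apply).symm
  -- FTC representation of the Taylor remainder
  have key : ∀ z : EuclideanSpace ℝ (Fin n), u (x + z) - u x - ⟪gradient u x, z⟫
      = ∫ t in (0:ℝ)..1, ⟪gradient u (x + t • z) - gradient u x, z⟫ := by
    intro z
    have hcont1 : Continuous fun t : ℝ => ⟪gradient u (x + t • z), z⟫ :=
      (hgc.comp (continuous_const.add (continuous_id.smul continuous_const))).inner
        continuous_const
    have hderiv : ∀ t ∈ Set.uIcc (0:ℝ) 1, HasDerivAt (fun τ : ℝ => u (x + τ • z))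
        ⟪gradient u (x + t • z), z⟫ t := by
      intro t _
      have h1 : HasFDerivAt u (fderiv ℝ u (x + t • z)) (x + t • z) :=
        (hu.differentiable one_ne_zero _).hasFDerivAt
      have h2 : HasDerivAt (fun τ : ℝ => x + τ • z) z t := by
        simpa using ((hasDerivAt_id t).smul_const z).const_add x
      have h3 := h1.comp_hasDerivAt t h2
      rw [hinner] at h3
      exact h3
    have hFTC := intervalIntegral.integral_eq_sub_of_hasDerivAt hderiv
      (hcont1.intervalIntegrable 0 1)
    have hsub : (∫ t in (0:ℝ)..1, ⟪gradient u (x + t • z) - gradient u x, z⟫)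
        = (∫ t in (0:ℝ)..1, ⟪gradient u (x + t • z), z⟫) - ⟪gradient u x, z⟫ := by
      simp only [inner_sub_left]
      rw [intervalIntegral.integral_sub (hcont1.intervalIntegrable 0 1)
        intervalIntegrable_const]
      simp
    rw [hsub, hFTC]
    simp
  -- pointwise bound on the remainder
  have hptR : ∀ z : EuclideanSpace ℝ (Fin n), |u (x + z) - u x - ⟪gradient u x, z⟫|
      ≤ ∫ t in (0:ℝ)..1, ‖gradient u (x + t • z) - gradient u x‖ * ‖z‖ := by
    intro z
    rw [key z]
    have hcont2 : Continuous fun t : ℝ => ⟪gradient u (x + t • z) - gradient u x, z⟫ :=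
      ((hgc.comp (continuous_const.add (continuous_id.smul continuous_const))).sub
        continuous_const).inner continuous_const
    have hcont3 : Continuous fun t : ℝ => ‖gradient u (x + t • z) - gradient u x‖ * ‖z‖ :=
      ((hgc.comp (continuous_const.add (continuous_id.smul continuous_const))).sub
        continuous_const).norm.mul continuous_const
    calc |∫ t in (0:ℝ)..1, ⟪gradient u (x + t • z) - gradient u x, z⟫|
        ≤ ∫ t in (0:ℝ)..1, |⟪gradient u (x + t • z) - gradient u x, z⟫| :=
          intervalIntegral.abs_integral_le_integral_abs zero_le_one
      _ ≤ ∫ t in (0:ℝ)..1, ‖gradient u (x + t • z) - gradient u x‖ * ‖z‖ := by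
          apply intervalIntegral.integral_mono_on zero_le_one
            (hcont2.abs.intervalIntegrable 0 1) (hcont3.intervalIntegrable 0 1)
          intro t _
          exact abs_real_inner_le_norm _ _
  set H : EuclideanSpace ℝ (Fin n) → ℝ → ENNReal := fun z t =>
    ENNReal.ofReal (‖gradient u (x + t • z) - gradient u x‖ * ‖z‖ ^ (1 + s)) with hHdef
  have hHmeas : Measurable (Function.uncurry H) := by
    apply Measurable.ennreal_ofReal
    exact ((hφc.comp (continuous_snd.smul continuous_fst)).measurable).mul
      ((measurable_norm.comp measurable_fst).pow_const _)
  -- pointwise lintegral bound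
  have hpt : ∀ z : EuclideanSpace ℝ (Fin n),
      ENNReal.ofReal (|u (x + z) - u x - ⟪gradient u x, z⟫| * ‖z‖ ^ s * ‖g (x + z)‖)
      ≤ ENNReal.ofReal G * ∫⁻ t in Set.Ioc (0:ℝ) 1, H z t := by
    intro z
    have hnm : ‖z‖ * ‖z‖ ^ s = ‖z‖ ^ (1 + s) := by
      rw [Real.rpow_add' (norm_nonneg z) h1s, Real.rpow_one]
    have hIoc : IntegrableOn
        (fun t : ℝ => ‖gradient u (x + t • z) - gradient u x‖ * ‖z‖ ^ (1 + s))
        (Set.Ioc (0:ℝ) 1) := by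
      apply Continuous.integrableOn_Ioc
      exact (hφc.comp (continuous_id.smul continuous_const)).mul continuous_const
    have hstep : |u (x + z) - u x - ⟪gradient u x, z⟫| * ‖z‖ ^ s * ‖g (x + z)‖
        ≤ (∫ t in Set.Ioc (0:ℝ) 1,
            ‖gradient u (x + t • z) - gradient u x‖ * ‖z‖ ^ (1 + s)) * G := by
      calc |u (x + z) - u x - ⟪gradient u x, z⟫| * ‖z‖ ^ s * ‖g (x + z)‖
          ≤ |u (x + z) - u x - ⟪gradient u x, z⟫| * ‖z‖ ^ s * G :=
            mul_le_mul_of_nonneg_left (hG _)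
              (mul_nonneg (abs_nonneg _) (Real.rpow_nonneg (norm_nonneg _) _))
        _ ≤ ((∫ t in (0:ℝ)..1, ‖gradient u (x + t • z) - gradient u x‖ * ‖z‖) * ‖z‖ ^ s)
              * G := by
            apply mul_le_mul_of_nonneg_right _ hG0
            exact mul_le_mul_of_nonneg_right (hptR z) (Real.rpow_nonneg (norm_nonneg _) _)
        _ = (∫ t in Set.Ioc (0:ℝ) 1,
              ‖gradient u (x + t • z) - gradient u x‖ * ‖z‖ ^ (1 + s)) * G := by
            congr 1
            rw [← intervalIntegral.integral_mul_const, intervalIntegral.integral_of_le zero_le_one]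
            apply setIntegral_congr_fun measurableSet_Ioc
            intro t _
            simp only [mul_assoc, hnm]
    calc ENNReal.ofReal (|u (x + z) - u x - ⟪gradient u x, z⟫| * ‖z‖ ^ s * ‖g (x + z)‖)
        ≤ ENNReal.ofReal ((∫ t in Set.Ioc (0:ℝ) 1,
            ‖gradient u (x + t • z) - gradient u x‖ * ‖z‖ ^ (1 + s)) * G) :=
          ENNReal.ofReal_le_ofReal hstep
      _ = ENNReal.ofReal G * ENNReal.ofReal (∫ t in Set.Ioc (0:ℝ) 1,
            ‖gradient u (x + t • z) - gradient u x‖ * ‖z‖ ^ (1 + s)) := by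
          rw [mul_comm, ENNReal.ofReal_mul hG0]
      _ = ENNReal.ofReal G * ∫⁻ t in Set.Ioc (0:ℝ) 1, H z t := by
          congr 1
          rw [MeasureTheory.ofReal_integral_eq_lintegral_ofReal hIoc
            (Filter.Eventually.of_forall fun t => by positivity)]
  have step1 : (∫⁻ z in Metric.ball (0 : EuclideanSpace ℝ (Fin n)) r,
        ENNReal.ofReal (|u (x + z) - u x - ⟪gradient u x, z⟫| * ‖z‖ ^ s * ‖g (x + z)‖))
      ≤ ENNReal.ofReal G * ∫⁻ t in Set.Ioc (0:ℝ) 1,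
          ∫⁻ z in Metric.ball (0 : EuclideanSpace ℝ (Fin n)) r, H z t := by
    calc (∫⁻ z in Metric.ball (0 : EuclideanSpace ℝ (Fin n)) r,
          ENNReal.ofReal (|u (x + z) - u x - ⟪gradient u x, z⟫| * ‖z‖ ^ s * ‖g (x + z)‖))
        ≤ ∫⁻ z in Metric.ball (0 : EuclideanSpace ℝ (Fin n)) r,
            ENNReal.ofReal G * ∫⁻ t in Set.Ioc (0:ℝ) 1, H z t := lintegral_mono fun z => hpt z
      _ = ENNReal.ofReal G * ∫⁻ z in Metric.ball (0 : EuclideanSpace ℝ (Fin n)) r,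
            ∫⁻ t in Set.Ioc (0:ℝ) 1, H z t :=
          lintegral_const_mul' _ _ ENNReal.ofReal_ne_top
      _ = ENNReal.ofReal G * ∫⁻ t in Set.Ioc (0:ℝ) 1,
            ∫⁻ z in Metric.ball (0 : EuclideanSpace ℝ (Fin n)) r, H z t := by
          congr 1
          exact lintegral_lintegral_swap hHmeas.aemeasurable
  set Kr : ENNReal := ∫⁻ z in Metric.ball (0 : EuclideanSpace ℝ (Fin n)) r,
      ENNReal.ofReal (‖z‖ ^ ((2:ℝ) + s)) with hKrdef
  set F : EuclideanSpace ℝ (Fin n) → ENNReal := fun w =>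
    ENNReal.ofReal (‖gradient u (x + w) - gradient u x‖ ^ 2 * ‖w‖ ^ s) with hFdef
  have hFlint : ∫⁻ w, F w = ENNReal.ofReal D := by
    rw [hD]
    exact (MeasureTheory.ofReal_integral_eq_lintegral_ofReal hInt
      (Filter.Eventually.of_forall fun w => by positivity)).symm
  -- Hölder step
  have hHolder : ∀ t ∈ Set.Ioc (0:ℝ) 1,
      (∫⁻ z in Metric.ball (0 : EuclideanSpace ℝ (Fin n)) r, H z t)
      ≤ (ENNReal.ofReal D) ^ (1/2 : ℝ) * Kr ^ (1/2 : ℝ) := by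
    intro t ht
    obtain ⟨ht0, ht1⟩ := ht
    set f : EuclideanSpace ℝ (Fin n) → ENNReal := fun z =>
      ENNReal.ofReal (‖gradient u (x + t • z) - gradient u x‖ * ‖z‖ ^ (s/2)) with hfdef
    set gq : EuclideanSpace ℝ (Fin n) → ENNReal := fun z =>
      ENNReal.ofReal (‖z‖ ^ (1 + s/2)) with hgqdef
    have hfm : Measurable f := by
      apply Measurable.ennreal_ofReal
      exact ((hφc.comp (continuous_id.const_smul t)).measurable).mul
        (measurable_norm.pow_const _)
    have hgm : Measurable gq := (measurable_norm.pow_const _).ennreal_ofReal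
    have hfg : ∀ z, H z t = (f * gq) z := by
      intro z
      simp only [hHdef, hfdef, hgqdef, Pi.mul_apply]
      rw [← ENNReal.ofReal_mul (mul_nonneg (norm_nonneg _) (Real.rpow_nonneg (norm_nonneg _) _))]
      congr 1
      rw [mul_assoc]
      congr 1
      have hne : s/2 + (1 + s/2) ≠ 0 := fun hcon => h1s (by linarith)
      rw [← Real.rpow_add' (norm_nonneg z) hne]
      congr 1
      ring
    have hconj : Real.HolderConjugate 2 2 := Real.HolderConjugate.two_two
    have hHold := ENNReal.lintegral_mul_le_Lp_mul_Lq
      (volume.restrict (Metric.ball (0 : EuclideanSpace ℝ (Fin n)) r)) hconj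
      hfm.aemeasurable hgm.aemeasurable
    have hf2eq : ∀ z, f z ^ (2:ℝ) = ENNReal.ofReal (t ^ (-s)) * F (t • z) := by
      intro z
      simp only [hfdef, hFdef]
      rw [aux_sq_helper _ _ _ (norm_nonneg _) (norm_nonneg _),
        show (2:ℝ) * (s/2) = s by ring,
        ← ENNReal.ofReal_mul (Real.rpow_nonneg ht0.le _)]
      congr 1
      rw [norm_smul, Real.norm_eq_abs, abs_of_pos ht0,
        Real.mul_rpow ht0.le (norm_nonneg z)]
      have htss : t ^ (-s) * t ^ s = 1 := by
        rw [← Real.rpow_add ht0]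
        simp
      linear_combination (-(‖gradient u (x + t • z) - gradient u x‖ ^ 2 * ‖z‖ ^ s)) * htss
    have hf2 : (∫⁻ z in Metric.ball (0 : EuclideanSpace ℝ (Fin n)) r, f z ^ (2:ℝ))
        ≤ ENNReal.ofReal D := by
      calc (∫⁻ z in Metric.ball (0 : EuclideanSpace ℝ (Fin n)) r, f z ^ (2:ℝ))
          = ENNReal.ofReal (t ^ (-s)) *
              ∫⁻ z in Metric.ball (0 : EuclideanSpace ℝ (Fin n)) r, F (t • z) := by
            rw [← lintegral_const_mul' _ _ ENNReal.ofReal_ne_top]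
            exact lintegral_congr fun z => hf2eq z
        _ ≤ ENNReal.ofReal (t ^ (-s)) * ∫⁻ z, F (t • z) := by
            gcongr
            exact Measure.restrict_le_self
        _ = ENNReal.ofReal (t ^ (-s)) *
              (ENNReal.ofReal |(t ^ Module.finrank ℝ (EuclideanSpace ℝ (Fin n)))⁻¹| *
                ∫⁻ w, F w) := by
            rw [aux_lintegral_comp_smul volume F ht0.ne']
        _ = (ENNReal.ofReal (t ^ (-s)) * ENNReal.ofReal |((t:ℝ) ^ n)⁻¹|) *
              ENNReal.ofReal D := by
            rw [hfr, hFlint, mul_assoc]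
        _ ≤ 1 * ENNReal.ofReal D := by
            gcongr
            rw [← ENNReal.ofReal_mul (Real.rpow_nonneg ht0.le _), ← ENNReal.ofReal_one]
            apply ENNReal.ofReal_le_ofReal
            have habs : |((t:ℝ) ^ n)⁻¹| = ((t:ℝ) ^ n)⁻¹ := abs_of_pos (by positivity)
            rw [habs]
            have ht_eq : t ^ (-s) = t ^ (n:ℝ) * t ^ α := by
              rw [← Real.rpow_add ht0]
              congr 1
              rw [hs]; ring
            rw [ht_eq, Real.rpow_natCast]
            have htα : t ^ α ≤ 1 := Real.rpow_le_one ht0.le ht1 hα0.le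
            calc t ^ n * t ^ α * ((t:ℝ) ^ n)⁻¹ = t ^ α := by
                  field_simp
              _ ≤ 1 := htα
        _ = ENNReal.ofReal D := one_mul _
    have hg2 : (∫⁻ z in Metric.ball (0 : EuclideanSpace ℝ (Fin n)) r, gq z ^ (2:ℝ)) = Kr := by
      rw [hKrdef]
      apply lintegral_congr fun z => ?_
      simp only [hgqdef]
      rw [aux_sq_helper' _ _ (norm_nonneg _), show (2:ℝ) * (1 + s/2) = 2 + s by ring]
    calc (∫⁻ z in Metric.ball (0 : EuclideanSpace ℝ (Fin n)) r, H z t)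
        = ∫⁻ z in Metric.ball (0 : EuclideanSpace ℝ (Fin n)) r, (f * gq) z :=
          lintegral_congr fun z => hfg z
      _ ≤ (∫⁻ z in Metric.ball (0 : EuclideanSpace ℝ (Fin n)) r, f z ^ (2:ℝ)) ^ (1/2 : ℝ) *
            (∫⁻ z in Metric.ball (0 : EuclideanSpace ℝ (Fin n)) r, gq z ^ (2:ℝ)) ^ (1/2 : ℝ) :=
          hHold
      _ ≤ (ENNReal.ofReal D) ^ (1/2 : ℝ) * Kr ^ (1/2 : ℝ) := by
          rw [hg2]
          gcongr
  -- scaling of Kr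
  have h2s : (2:ℝ) + s = 2 - ((n:ℝ) + α) := by rw [hs]; ring
  have hKr : Kr = ENNReal.ofReal (r ^ ((2:ℝ) - α)) * K1 := by
    set f2 : EuclideanSpace ℝ (Fin n) → ENNReal :=
      (Metric.ball (0 : EuclideanSpace ℝ (Fin n)) 1).indicator
        (fun w => ENNReal.ofReal (‖w‖ ^ ((2:ℝ) + s))) with hf2def
    have hmem : ∀ z : EuclideanSpace ℝ (Fin n),
        r⁻¹ • z ∈ Metric.ball (0 : EuclideanSpace ℝ (Fin n)) 1 ↔
          z ∈ Metric.ball (0 : EuclideanSpace ℝ (Fin n)) r := by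
      intro z
      rw [Metric.mem_ball, Metric.mem_ball, dist_zero_right, dist_zero_right,
        norm_smul, Real.norm_eq_abs, abs_of_pos (inv_pos.2 hr)]
      constructor
      · intro h
        have h2 := mul_lt_mul_of_pos_left h hr
        rw [← mul_assoc, mul_inv_cancel₀ hr.ne', one_mul, mul_one] at h2
        exact h2
      · intro h
        have h2 := mul_lt_mul_of_pos_left h (inv_pos.2 hr)
        rwa [inv_mul_cancel₀ hr.ne'] at h2
    have hlhs : ∀ z, f2 (r⁻¹ • z) = ENNReal.ofReal ((r⁻¹) ^ ((2:ℝ) + s)) *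
        (Metric.ball (0 : EuclideanSpace ℝ (Fin n)) r).indicator
          (fun w => ENNReal.ofReal (‖w‖ ^ ((2:ℝ) + s))) z := by
      intro z
      by_cases hz : z ∈ Metric.ball (0 : EuclideanSpace ℝ (Fin n)) r
      · rw [hf2def, Set.indicator_of_mem ((hmem z).2 hz), Set.indicator_of_mem hz,
          ← ENNReal.ofReal_mul (Real.rpow_nonneg (inv_pos.2 hr).le _)]
        congr 1
        rw [norm_smul, Real.norm_eq_abs, abs_of_pos (inv_pos.2 hr),
          Real.mul_rpow (inv_pos.2 hr).le (norm_nonneg z)]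
      · rw [hf2def, Set.indicator_of_notMem (fun hc => hz ((hmem z).1 hc)),
          Set.indicator_of_notMem hz, mul_zero]
    have haux := aux_lintegral_comp_smul (volume : Measure (EuclideanSpace ℝ (Fin n))) f2
      (inv_ne_zero hr.ne')
    have lhs_eq : (∫⁻ z, f2 (r⁻¹ • z)) = ENNReal.ofReal ((r⁻¹) ^ ((2:ℝ) + s)) * Kr := by
      rw [lintegral_congr hlhs, lintegral_const_mul' _ _ ENNReal.ofReal_ne_top,
        lintegral_indicator Metric.isOpen_ball.measurableSet, hKrdef]
    have rhs_eq : ENNReal.ofReal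
          |((r⁻¹) ^ Module.finrank ℝ (EuclideanSpace ℝ (Fin n)))⁻¹| * (∫⁻ z, f2 z)
        = ENNReal.ofReal ((r:ℝ) ^ n) * K1 := by
      rw [hfr]
      congr 1
      · congr 1
        rw [abs_of_pos (by positivity), ← inv_pow, inv_inv]
      · rw [hf2def, lintegral_indicator Metric.isOpen_ball.measurableSet, hK1, h2s]
    have e1 : ENNReal.ofReal ((r⁻¹) ^ ((2:ℝ) + s)) * Kr = ENNReal.ofReal ((r:ℝ) ^ n) * K1 := by
      rw [← lhs_eq, ← rhs_eq]
      exact haux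
    have e2 : ENNReal.ofReal (r ^ ((2:ℝ) + s)) *
        (ENNReal.ofReal ((r⁻¹) ^ ((2:ℝ) + s)) * Kr) = Kr := by
      rw [← mul_assoc, ← ENNReal.ofReal_mul (Real.rpow_nonneg hr.le _),
        ← Real.mul_rpow hr.le (inv_pos.2 hr).le, mul_inv_cancel₀ hr.ne', Real.one_rpow,
        ENNReal.ofReal_one, one_mul]
    calc Kr = ENNReal.ofReal (r ^ ((2:ℝ) + s)) *
          (ENNReal.ofReal ((r⁻¹) ^ ((2:ℝ) + s)) * Kr) := e2.symm
      _ = ENNReal.ofReal (r ^ ((2:ℝ) + s)) * (ENNReal.ofReal ((r:ℝ) ^ n) * K1) := by rw [e1]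
      _ = ENNReal.ofReal (r ^ ((2:ℝ) - α)) * K1 := by
          rw [← mul_assoc, ← ENNReal.ofReal_mul (Real.rpow_nonneg hr.le _)]
          congr 2
          rw [← Real.rpow_natCast r n, ← Real.rpow_add hr]
          congr 1
          rw [hs]
          push_cast
          ring
  -- final assembly
  have h12 : (0:ℝ) ≤ 1/2 := by norm_num
  have hb1 : (∫⁻ t in Set.Ioc (0:ℝ) 1,
        ∫⁻ z in Metric.ball (0 : EuclideanSpace ℝ (Fin n)) r, H z t)
      ≤ (ENNReal.ofReal D) ^ (1/2 : ℝ) * Kr ^ (1/2 : ℝ) := by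
    calc (∫⁻ t in Set.Ioc (0:ℝ) 1,
          ∫⁻ z in Metric.ball (0 : EuclideanSpace ℝ (Fin n)) r, H z t)
        ≤ ∫⁻ _ in Set.Ioc (0:ℝ) 1, (ENNReal.ofReal D) ^ (1/2 : ℝ) * Kr ^ (1/2 : ℝ) :=
          setLIntegral_mono' measurableSet_Ioc hHolder
      _ = ((ENNReal.ofReal D) ^ (1/2 : ℝ) * Kr ^ (1/2 : ℝ)) * volume (Set.Ioc (0:ℝ) 1) :=
          setLIntegral_const _ _
      _ = (ENNReal.ofReal D) ^ (1/2 : ℝ) * Kr ^ (1/2 : ℝ) := by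
          rw [Real.volume_Ioc]
          norm_num
  have hfinal : ENNReal.ofReal G * (∫⁻ t in Set.Ioc (0:ℝ) 1,
        ∫⁻ z in Metric.ball (0 : EuclideanSpace ℝ (Fin n)) r, H z t)
      ≤ ENNReal.ofReal ((Real.sqrt κ + 1) * G * Real.sqrt D * r ^ (1 - α/2)) := by
    calc ENNReal.ofReal G * (∫⁻ t in Set.Ioc (0:ℝ) 1,
          ∫⁻ z in Metric.ball (0 : EuclideanSpace ℝ (Fin n)) r, H z t)
        ≤ ENNReal.ofReal G * ((ENNReal.ofReal D) ^ (1/2 : ℝ) * Kr ^ (1/2 : ℝ)) := by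
          gcongr
      _ = ENNReal.ofReal G * (ENNReal.ofReal (Real.sqrt D) *
            (ENNReal.ofReal (r ^ (1 - α/2)) * ENNReal.ofReal (Real.sqrt κ))) := by
          rw [hKr, ENNReal.mul_rpow_of_nonneg _ _ h12,
            ENNReal.ofReal_rpow_of_nonneg hD0 h12,
            ENNReal.ofReal_rpow_of_nonneg (Real.rpow_nonneg hr.le _) h12,
            ← ENNReal.ofReal_toReal hK1top.ne,
            ENNReal.ofReal_rpow_of_nonneg hκ0 h12]
          congr 3
          · rw [Real.sqrt_eq_rpow]
          · rw [← Real.rpow_mul hr.le]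
            congr 1
            ring
          · rw [Real.sqrt_eq_rpow]
      _ = ENNReal.ofReal (G * (Real.sqrt D * (r ^ (1 - α/2) * Real.sqrt κ))) := by
          rw [← ENNReal.ofReal_mul (Real.rpow_nonneg hr.le _),
            ← ENNReal.ofReal_mul (Real.sqrt_nonneg D),
            ← ENNReal.ofReal_mul hG0]
      _ ≤ ENNReal.ofReal ((Real.sqrt κ + 1) * G * Real.sqrt D * r ^ (1 - α/2)) := by
          apply ENNReal.ofReal_le_ofReal
          have e1 : G * (Real.sqrt D * (r ^ (1 - α/2) * Real.sqrt κ))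
              = Real.sqrt κ * (G * Real.sqrt D * r ^ (1 - α/2)) := by ring
          have e2 : (Real.sqrt κ + 1) * G * Real.sqrt D * r ^ (1 - α/2)
              = (Real.sqrt κ + 1) * (G * Real.sqrt D * r ^ (1 - α/2)) := by ring
          rw [e1, e2]
          apply mul_le_mul_of_nonneg_right (by linarith [Real.sqrt_nonneg κ])
          exact mul_nonneg (mul_nonneg hG0 (Real.sqrt_nonneg _)) (Real.rpow_nonneg hr.le _)
  exact le_trans step1 hfinal
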